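/- Let x be an element of the edge space of K_ℓ with orthogonal decomposition x = y + z into cycle part y and cut part z. Then ||z||² = (2/ℓ)(Σ_{(i,j)} x_{(i,j)}² + Σ x_{(i,j)} x_{(i,k)}), where the second sum ranges over pairs of distinct edges sharing a vertex and signs follow the convention x_{(i,j)} = −x_{(j,i)}. -/

import Mathlib

open Finset Matrix

/-- Edges of the complete graph `K_ℓ`, oriented from smaller to larger index. -/
abbrev Edge (ℓ : ℕ) := {p : Fin ℓ × Fin ℓ // p.1 < p.2}

/-- The signed entry `Σ_{(a,b),(c,d)}` of the covariance matrix, with the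
conventions `Σ_{(j,i),(r,s)} = -Σ_{(i,j),(r,s)}` and `Σ_{(i,j),(s,r)} = -Σ_{(i,j),(r,s)}`:
it is 1 on equal oriented edges, ±1/3 on edges sharing exactly one vertex,
and 0 on disjoint edges. -/
noncomputable def sigEntry {ℓ : ℕ} (a b c d : Fin ℓ) : ℝ :=
  if a = c ∧ b = d then 1
  else if a = d ∧ b = c then -1
  else if a = c ∨ b = d then 1/3
  else if a = d ∨ b = c then -1/3
  else 0

/-- The covariance matrix `Σ` on the edge space of `K_ℓ`. -/
noncomputable def SigMat (ℓ : ℕ) : Matrix (Edge ℓ) (Edge ℓ) ℝ :=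
  fun e f => sigEntry e.1.1 e.1.2 f.1.1 f.1.2

/-- The boundary (incidence) matrix of `K_ℓ`, sending the edge `(u,v)` to `u - v`. -/
noncomputable def bdry (ℓ : ℕ) : Matrix (Fin ℓ) (Edge ℓ) ℝ :=
  fun u e => if e.1.1 = u then 1 else if e.1.2 = u then -1 else 0

/-- The cycle space of `K_ℓ`: the kernel of the boundary map. -/
noncomputable def cycleSpace (ℓ : ℕ) : Submodule ℝ (Edge ℓ → ℝ) :=
  LinearMap.ker (Matrix.toLin' (bdry ℓ))

/-- The star vector at vertex `i`: the sum of all outgoing edges `(i,j)`,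
with the sign convention `(j,i) = -(i,j)`. -/
noncomputable def starVec (ℓ : ℕ) (i : Fin ℓ) : Edge ℓ → ℝ :=
  fun e => if e.1.1 = i then 1 else if e.1.2 = i then -1 else 0

/-- The cut space of `K_ℓ`: the span of the star vectors. -/
noncomputable def cutSpace (ℓ : ℕ) : Submodule ℝ (Edge ℓ → ℝ) :=
  Submodule.span ℝ (Set.range (starVec ℓ))

/-- The antisymmetric extension of an edge-space vector to all ordered pairs,
with the convention `x_{(j,i)} = -x_{(i,j)}`. -/
noncomputable def extAS {ℓ : ℕ} (x : Edge ℓ → ℝ) (i j : Fin ℓ) : ℝ :=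
  if h : i < j then x ⟨(i, j), h⟩ else if h : j < i then -x ⟨(j, i), h⟩ else 0

/-- The net signed flow out of vertex `i`. -/
noncomputable def flow {ℓ : ℕ} (x : Edge ℓ → ℝ) (i : Fin ℓ) : ℝ := ∑ j, extAS x i j

/-- If `x = y + z` with `y` in the cycle space and `z` in the cut space of `K_ℓ`,
then `‖z‖² = (2/ℓ)(Σ_{(i,j)} x_{(i,j)}² + Σ x_{(i,j)} x_{(i,k)})`, where the
second sum ranges over pairs of distinct edges sharing a vertex, with signs
given by the convention `x_{(i,j)} = −x_{(j,i)}`. -/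
lemma extAS_anti {ℓ : ℕ} (x : Edge ℓ → ℝ) (i j : Fin ℓ) : extAS x j i = - extAS x i j := by
  unfold extAS
  rcases lt_trichotomy i j with h | h | h
  · simp [h, h.not_gt]
  · simp [h, lt_irrefl]
  · simp [h, h.not_gt]

lemma extAS_diag {ℓ : ℕ} (x : Edge ℓ → ℝ) (i : Fin ℓ) : extAS x i i = 0 := by
  simp [extAS]

lemma extAS_edge {ℓ : ℕ} (x : Edge ℓ → ℝ) (e : Edge ℓ) : extAS x e.1.1 e.1.2 = x e := by
  rw [extAS, dif_pos e.2]

lemma extAS_add {ℓ : ℕ} (y z : Edge ℓ → ℝ) (i j : Fin ℓ) :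
    extAS (y + z) i j = extAS y i j + extAS z i j := by
  unfold extAS
  rcases lt_trichotomy i j with h | h | h
  · simp [h]
  · simp [h, lt_irrefl]
  · simp [h, h.not_gt]; ring

lemma sum_pairs {ℓ : ℕ} (K : Fin ℓ → Fin ℓ → ℝ) (hsymm : ∀ a b, K a b = K b a)
    (hdiag : ∀ a, K a a = 0) :
    ∑ a, ∑ b, K a b = 2 * ∑ e : Edge ℓ, K e.1.1 e.1.2 := by
  have h1 : ∑ e : Edge ℓ, K e.1.1 e.1.2
      = ∑ p ∈ Finset.univ.filter (fun p : Fin ℓ × Fin ℓ => p.1 < p.2), K p.1 p.2 := by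
    rw [Finset.sum_subtype (p := fun p : Fin ℓ × Fin ℓ => p.1 < p.2)
      (Finset.univ.filter (fun p : Fin ℓ × Fin ℓ => p.1 < p.2))
      (by simp) (fun p => K p.1 p.2)]
  have h2 : ∑ a, ∑ b, K a b = ∑ p : Fin ℓ × Fin ℓ, K p.1 p.2 := by
    rw [Fintype.sum_prod_type]
  rw [h2, ← Finset.sum_filter_add_sum_filter_not Finset.univ (fun p : Fin ℓ × Fin ℓ => p.1 < p.2)]
  rw [← Finset.sum_filter_add_sum_filter_not
    (Finset.univ.filter (fun p : Fin ℓ × Fin ℓ => ¬ p.1 < p.2)) (fun p => p.2 < p.1)]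
  have h3 : ∑ p ∈ (Finset.univ.filter (fun p : Fin ℓ × Fin ℓ => ¬ p.1 < p.2)).filter
      (fun p => p.2 < p.1), K p.1 p.2
      = ∑ p ∈ Finset.univ.filter (fun p : Fin ℓ × Fin ℓ => p.1 < p.2), K p.1 p.2 := by
    apply Finset.sum_nbij' (fun p => Prod.swap p) (fun p => Prod.swap p)
    · intro p hp; simp at hp ⊢; exact hp.2
    · intro p hp; simp at hp ⊢; exact ⟨hp.le, hp⟩
    · intro p _; simp
    · intro p _; simp
    · intro p _; exact hsymm _ _
  have h4 : ∑ p ∈ (Finset.univ.filter (fun p : Fin ℓ × Fin ℓ => ¬ p.1 < p.2)).filter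
      (fun p => ¬ p.2 < p.1), K p.1 p.2 = 0 := by
    apply Finset.sum_eq_zero
    intro p hp
    simp at hp
    have : p.1 = p.2 := le_antisymm hp.2 hp.1
    rw [show K p.1 p.2 = K p.1 p.1 by rw [this]] at *
    exact hdiag _
  rw [h3, h4, h1]; ring

lemma bdry_sum_eq_flow {ℓ : ℕ} (w : Edge ℓ → ℝ) (i : Fin ℓ) :
    ∑ e : Edge ℓ, bdry ℓ i e * w e = flow w i := by
  set K : Fin ℓ → Fin ℓ → ℝ :=
    fun a b => (if a = i then (1:ℝ) else if b = i then -1 else 0) * extAS w a b with hKdef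
  have hK : ∀ a b, K a b
      = (if a = i then extAS w i b else 0) + (if b = i then extAS w i a else 0) := by
    intro a b
    by_cases h1 : a = i <;> by_cases h2 : b = i <;>
      simp [hKdef, h1, h2, extAS_diag, extAS_anti w i a]
  have hsymm : ∀ a b, K a b = K b a := by
    intro a b; rw [hK, hK]; ring
  have hdiag : ∀ a, K a a = 0 := by
    intro a; simp [hKdef, extAS_diag]
  have hp := sum_pairs K hsymm hdiag
  have h1 : ∑ e : Edge ℓ, K e.1.1 e.1.2 = ∑ e : Edge ℓ, bdry ℓ i e * w e := by
    apply Finset.sum_congr rfl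
    intro e _
    rw [hKdef]; simp only [bdry, extAS_edge]
  have h2 : ∑ a, ∑ b, K a b = 2 * flow w i := by
    have : ∀ a, ∑ b, K a b = (if a = i then flow w i else 0) + extAS w i a := by
      intro a
      simp only [hK, Finset.sum_add_distrib]
      congr 1
      · split <;> simp [flow]
      · simp
    rw [Finset.sum_congr rfl (fun a _ => this a)]
    rw [Finset.sum_add_distrib]
    simp [flow]; ring
  rw [hp, h1] at h2
  linarith [h2]

lemma flow_cycle {ℓ : ℕ} {y : Edge ℓ → ℝ} (hy : y ∈ cycleSpace ℓ) (i : Fin ℓ) :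
    flow y i = 0 := by
  rw [← bdry_sum_eq_flow]
  have := LinearMap.mem_ker.mp hy
  have h2 := congrFun this i
  rw [Matrix.toLin'_apply] at h2
  simpa [Matrix.mulVec, dotProduct] using h2

lemma cut_eq {ℓ : ℕ} {z : Edge ℓ → ℝ} (hz : z ∈ cutSpace ℓ) :
    ∃ c : Fin ℓ → ℝ, ∀ e : Edge ℓ, z e = c e.1.1 - c e.1.2 := by
  rw [cutSpace] at hz
  obtain ⟨c, hc⟩ := (Submodule.mem_span_range_iff_exists_fun ℝ).mp hz
  refine ⟨c, fun e => ?_⟩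
  have := congrFun hc e
  simp only [Finset.sum_apply, Pi.smul_apply, smul_eq_mul] at this
  rw [← this]
  have hne : e.1.1 ≠ e.1.2 := ne_of_lt e.2
  have hpt : ∀ i, c i * starVec ℓ i e
      = (if e.1.1 = i then c i else 0) + (if e.1.2 = i then -c i else 0) := by
    intro i
    by_cases h1 : e.1.1 = i <;> by_cases h2 : e.1.2 = i <;>
      simp [starVec, h1, h2] at *
  rw [Finset.sum_congr rfl (fun i _ => hpt i), Finset.sum_add_distrib]
  simp [sub_eq_add_neg]

theorem cut_part_norm_sq {ℓ : ℕ} (hℓ : 2 ≤ ℓ) (x y z : Edge ℓ → ℝ)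
    (hx : x = y + z) (hy : y ∈ cycleSpace ℓ) (hz : z ∈ cutSpace ℓ) :
    ∑ e : Edge ℓ, z e ^ 2
      = (2 / (ℓ : ℝ)) * ((∑ e : Edge ℓ, x e ^ 2) +
          (1 / 2) * ∑ i : Fin ℓ, ∑ j : Fin ℓ, ∑ k : Fin ℓ,
            (if j ≠ k then extAS x i j * extAS x i k else 0)) := by
  obtain ⟨c, hc⟩ := cut_eq hz
  set f : Fin ℓ → ℝ := flow x with hf
  have hℓ0 : (ℓ : ℝ) ≠ 0 := by
    have : 0 < ℓ := lt_of_lt_of_le (by norm_num) hℓ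
    exact_mod_cast this.ne'
  -- flow x = flow z
  have hfz : ∀ i, flow x i = flow z i := by
    intro i
    have hadd : flow (y + z) i = flow y i + flow z i := by
      simp [flow, extAS_add, Finset.sum_add_distrib]
    rw [hx, hadd, flow_cycle hy]; ring
  -- extAS z in terms of c
  have hez : ∀ i j, extAS z i j = (if i = j then 0 else c i - c j) := by
    intro i j
    rcases lt_trichotomy i j with h | h | h
    · rw [extAS, dif_pos h, hc]; simp [h.ne]
    · subst h; simp [extAS_diag]
    · rw [extAS, dif_neg h.not_gt, dif_pos h, hc]
      simp [h.ne']
  have hflowz : ∀ i, flow z i = ℓ * c i - ∑ j, c j := by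
    intro i
    have : ∀ j : Fin ℓ, extAS z i j = c i - c j := by
      intro j; rw [hez]; split
      · rename_i h; rw [h]; ring
      · rfl
    rw [flow, Finset.sum_congr rfl (fun j _ => this j), Finset.sum_sub_distrib]
    simp [Finset.card_univ, mul_comm]
  have hzf : ∀ a b, extAS z a b = (f a - f b) / ℓ := by
    intro a b
    have hfa : f a - f b = ℓ * (c a - c b) := by
      rw [hf]; simp only [hfz a, hfz b, hflowz]; ring
    rw [hez, hfa]
    split
    · rename_i h; rw [h]; ring
    · field_simp
  -- sum of flows is zero
  have hsumf : ∑ i, f i = 0 := by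
    have h1 : ∑ i, f i = ∑ i, ∑ j, extAS x i j := rfl
    have h2 : ∑ i : Fin ℓ, ∑ j : Fin ℓ, extAS x i j
        = - ∑ i : Fin ℓ, ∑ j : Fin ℓ, extAS x i j := by
      calc ∑ i : Fin ℓ, ∑ j : Fin ℓ, extAS x i j
          = ∑ j : Fin ℓ, ∑ i : Fin ℓ, extAS x i j := Finset.sum_comm
        _ = ∑ j : Fin ℓ, ∑ i : Fin ℓ, - extAS x j i := by
            apply Finset.sum_congr rfl; intro j _
            apply Finset.sum_congr rfl; intro i _
            rw [extAS_anti]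
        _ = - ∑ i : Fin ℓ, ∑ j : Fin ℓ, extAS x i j := by simp
    rw [h1]; linarith
  -- LHS
  have hL : ∑ e : Edge ℓ, z e ^ 2 = (1/2) * ∑ a, ∑ b, ((f a - f b)/ℓ)^2 := by
    have hp := sum_pairs (fun a b => ((f a - f b)/ℓ)^2)
      (by intro a b; ring) (by intro a; simp)
    have he : ∀ e : Edge ℓ, ((f e.1.1 - f e.1.2)/ℓ)^2 = z e ^ 2 := by
      intro e; rw [← hzf, extAS_edge]
    simp only [he] at hp
    linarith
  -- ∑∑ extAS² = 2 ∑ x²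
  have hX : ∑ a, ∑ b, (extAS x a b)^2 = 2 * ∑ e : Edge ℓ, x e ^ 2 := by
    have hp := sum_pairs (fun a b => (extAS x a b)^2)
      (by intro a b; show extAS x a b ^ 2 = extAS x b a ^ 2
          rw [extAS_anti x a b]; ring)
      (by intro a; simp [extAS_diag])
    simpa [extAS_edge] using hp
  -- triple sum
  have hT : ∑ i : Fin ℓ, ∑ j : Fin ℓ, ∑ k : Fin ℓ,
        (if j ≠ k then extAS x i j * extAS x i k else 0)
      = ∑ i, f i ^ 2 - ∑ a, ∑ b, (extAS x a b)^2 := by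
    have hin : ∀ i j, ∑ k : Fin ℓ, (if j ≠ k then extAS x i j * extAS x i k else 0)
        = extAS x i j * f i - extAS x i j ^ 2 := by
      intro i j
      have hk : ∀ k : Fin ℓ, (if j ≠ k then extAS x i j * extAS x i k else 0)
          = extAS x i j * extAS x i k
            - (if j = k then extAS x i j * extAS x i k else 0) := by
        intro k; by_cases h : j = k <;> simp [h]
      rw [Finset.sum_congr rfl (fun k _ => hk k), Finset.sum_sub_distrib,
        Finset.sum_ite_eq Finset.univ j (fun k => extAS x i j * extAS x i k),
        ← Finset.mul_sum]
      have hfi : ∑ k, extAS x i k = f i := rfl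
      rw [hfi]
      simp only [Finset.mem_univ, if_true]
      ring
    have hmid : ∀ i, ∑ j : Fin ℓ, (extAS x i j * f i - extAS x i j ^ 2)
        = f i ^ 2 - ∑ j, extAS x i j ^ 2 := by
      intro i
      rw [Finset.sum_sub_distrib, ← Finset.sum_mul]
      have : ∑ j, extAS x i j = f i := rfl
      rw [this]; ring
    calc ∑ i : Fin ℓ, ∑ j : Fin ℓ, ∑ k : Fin ℓ,
          (if j ≠ k then extAS x i j * extAS x i k else 0)
        = ∑ i : Fin ℓ, (f i ^ 2 - ∑ j, extAS x i j ^ 2) := by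
          apply Finset.sum_congr rfl; intro i _
          rw [Finset.sum_congr rfl (fun j _ => hin i j), hmid i]
      _ = ∑ i, f i ^ 2 - ∑ a, ∑ b, (extAS x a b)^2 := by
          rw [Finset.sum_sub_distrib]
  -- expansion
  have hexp : ∑ a, ∑ b, (f a - f b)^2
      = 2 * ℓ * ∑ i, f i ^ 2 - 2 * (∑ i, f i)^2 := by
    have : ∀ a, ∑ b, (f a - f b)^2
        = ℓ * f a ^ 2 - 2 * f a * (∑ i, f i) + ∑ i, f i ^ 2 := by
      intro a
      have : ∀ b, (f a - f b)^2 = f a ^ 2 - 2 * f a * f b + f b ^ 2 := fun b => by ring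
      rw [Finset.sum_congr rfl (fun b _ => this b), Finset.sum_add_distrib,
        Finset.sum_sub_distrib, ← Finset.mul_sum]
      simp [Finset.card_univ, mul_comm]
    rw [Finset.sum_congr rfl (fun a _ => this a), Finset.sum_add_distrib,
      Finset.sum_sub_distrib, ← Finset.mul_sum, ← Finset.sum_mul]
    simp [Finset.card_univ, ← Finset.mul_sum]
    ring
  have hdiv : ∑ a, ∑ b, ((f a - f b)/ℓ)^2 = (∑ a, ∑ b, (f a - f b)^2) / ℓ^2 := by
    simp [div_pow, Finset.sum_div]
  rw [hL, hdiv, hexp, hsumf, hT, hX]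
  field_simp
  ring
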